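/- Let I ⊆ ℝ be an open interval, k : I → ℝ continuous and nowhere zero, and c : I×I → ℝ twice continuously differentiable, satisfying ∂₁∂₂ c(u,v) = k(u)·∂₂c(u,v) and ∂₁∂₂ c(u,v) = k(v)·∂₁c(u,v) for all u, v ∈ I. Then there exist constants α, β such that c(u,v) = α·z(u)·z(v) + β for all u, v ∈ I, where z : I → ℝ is any fixed positive solution of z′ = k·z (i.e. z = exp(K) with K an antiderivative of k). -/

import Mathlib

open Set Filter

theorem mixed_partial_separation
    (I : Set ℝ) (hI : IsOpen I) (hIc : I.OrdConnected) (hIne : I.Nonempty)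
    (k : ℝ → ℝ) (hk : ContinuousOn k I) (hk0 : ∀ u ∈ I, k u ≠ 0)
    (c : ℝ → ℝ → ℝ)
    (hc : ContDiffOn ℝ 2 (fun p : ℝ × ℝ => c p.1 p.2) (I ×ˢ I))
    (hsep1 : ∀ u ∈ I, ∀ v ∈ I,
      deriv (fun s => deriv (fun t => c s t) v) u
        = k u * deriv (fun t => c u t) v)
    (hsep2 : ∀ u ∈ I, ∀ v ∈ I,
      deriv (fun s => deriv (fun t => c s t) v) u
        = k v * deriv (fun s => c s v) u)
    (z : ℝ → ℝ) (hzpos : ∀ v ∈ I, 0 < z v)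
    (hz : ∀ v ∈ I, HasDerivAt z (k v * z v) v) :
    ∃ α β : ℝ, ∀ u ∈ I, ∀ v ∈ I, c u v = α * z u * z v + β := by
  obtain ⟨u0, hu0⟩ := hIne
  have hconv : Convex ℝ I := hIc.convex
  -- constancy helper
  have hconst : ∀ f : ℝ → ℝ, (∀ x ∈ I, HasDerivAt f 0 x) →
      ∀ a ∈ I, ∀ b ∈ I, f a = f b := by
    intro f hf a ha b hb
    have hdf : DifferentiableOn ℝ f I := fun x hx =>
      (hf x hx).differentiableAt.differentiableWithinAt
    refine hconv.is_const_of_fderivWithin_eq_zero hdf (fun x hx => ?_) ha hb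
    rw [fderivWithin_of_isOpen hI hx, (hf x hx).hasFDerivAt.fderiv]
    ext
    simp
  -- setup
  set F : ℝ × ℝ → ℝ := fun p => c p.1 p.2 with hF
  have hs : IsOpen (I ×ˢ I) := hI.prod hI
  have hFd : ∀ u ∈ I, ∀ v ∈ I, DifferentiableAt ℝ F (u, v) := fun u hu v hv =>
    (hc.differentiableOn (by norm_num)).differentiableAt (hs.mem_nhds ⟨hu, hv⟩)
  -- partial derivative in second variable
  have hdv : ∀ u ∈ I, ∀ v ∈ I,
      HasDerivAt (fun t => c u t) (fderiv ℝ F (u, v) (0, 1)) v := by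
    intro u hu v hv
    have h1 : HasDerivAt (fun t : ℝ => ((u : ℝ), t)) ((0 : ℝ), (1 : ℝ)) v :=
      (hasDerivAt_const v u).prodMk (hasDerivAt_id v)
    exact (hFd u hu v hv).hasFDerivAt.comp_hasDerivAt v h1
  have hdu : ∀ u ∈ I, ∀ v ∈ I,
      HasDerivAt (fun s => c s v) (fderiv ℝ F (u, v) (1, 0)) u := by
    intro u hu v hv
    have h1 : HasDerivAt (fun s : ℝ => (s, (v : ℝ))) ((1 : ℝ), (0 : ℝ)) u :=
      (hasDerivAt_id u).prodMk (hasDerivAt_const u v)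
    exact (hFd u hu v hv).hasFDerivAt.comp_hasDerivAt u h1
  have hgd : ∀ u ∈ I, ∀ v ∈ I,
      HasDerivAt (fun t => c u t) (deriv (fun t => c u t) v) v := fun u hu v hv =>
    (hdv u hu v hv).differentiableAt.hasDerivAt
  have hgval : ∀ u ∈ I, ∀ v ∈ I,
      deriv (fun t => c u t) v = fderiv ℝ F (u, v) (0, 1) := fun u hu v hv =>
    (hdv u hu v hv).deriv
  -- C^1 smoothness of fderiv
  have hG : ContDiffOn ℝ 1 (fderiv ℝ F) (I ×ˢ I) := by
    have h2 : (2 : WithTop ℕ∞) = 1 + 1 := by norm_num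
    exact ((contDiffOn_succ_iff_fderiv_of_isOpen hs).1 (h2 ▸ hc)).2.2
  -- differentiability in u of the partial derivative, and the ODE it satisfies
  have hgu : ∀ v ∈ I, ∀ u ∈ I,
      HasDerivAt (fun s => deriv (fun t => c s t) v)
        (k u * deriv (fun t => c u t) v) u := by
    intro v hv u hu
    have h2 : DifferentiableAt ℝ (fun s : ℝ => fderiv ℝ F (s, v) ((0 : ℝ), (1 : ℝ))) u := by
      have h3 : DifferentiableAt ℝ (fun s : ℝ => fderiv ℝ F (s, v)) u :=
        ((hG.differentiableOn one_ne_zero).differentiableAt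
          (hs.mem_nhds ⟨hu, hv⟩)).comp u
          (differentiableAt_id.prodMk (differentiableAt_const v))
      exact h3.clm_apply (differentiableAt_const _)
    have hev : (fun s => deriv (fun t => c s t) v)
        =ᶠ[nhds u] fun s : ℝ => fderiv ℝ F (s, v) ((0 : ℝ), (1 : ℝ)) :=
      (hI.eventually_mem hu).mono fun s hs' => hgval s hs' v hv
    have hdiff : DifferentiableAt ℝ (fun s => deriv (fun t => c s t) v) u :=
      h2.congr_of_eventuallyEq hev
    exact hsep1 u hu v hv ▸ hdiff.hasDerivAt

  -- Step 1: g u v = φ v * z u  where φ v = g u0 v / z u0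
  have hz0 : ∀ u ∈ I, z u ≠ 0 := fun u hu => (hzpos u hu).ne'
  have hstep1 : ∀ v ∈ I, ∀ u ∈ I,
      deriv (fun t => c u t) v = (deriv (fun t => c u0 t) v / z u0) * z u := by
    intro v hv u hu
    have hq : ∀ x ∈ I, HasDerivAt (fun s => deriv (fun t => c s t) v / z s) 0 x := by
      intro x hx
      have := (hgu v hv x hx).div (hz x hx) (hz0 x hx)
      have heq : (k x * deriv (fun t => c x t) v * z x
          - deriv (fun t => c x t) v * (k x * z x)) / (z x) ^ 2 = 0 := by ring
      rwa [heq] at this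
    have h := hconst _ hq u hu u0 hu0
    rw [div_eq_div_iff (hz0 u hu) (hz0 u0 hu0)] at h
    rw [div_mul_eq_mul_div, eq_div_iff (hz0 u0 hu0)]
    linear_combination h
  -- pick u1 ∈ I with z u1 ≠ z u0
  obtain ⟨ε, hε, hball⟩ := Metric.isOpen_iff.1 hI u0 hu0
  have hu1 : u0 + ε / 2 ∈ I := by
    apply hball
    simp only [Metric.mem_ball, Real.dist_eq]
    rw [abs_of_pos (by linarith)]
    · linarith
  set u1 := u0 + ε / 2 with hu1def
  have hu01 : u0 < u1 := by simp [hu1def]; linarith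
  have hzne : z u0 ≠ z u1 := by
    intro hzz
    have hIcc : Icc u0 u1 ⊆ I := hIc.out hu0 hu1
    have hcont : ContinuousOn z (Icc u0 u1) := fun x hx =>
      (hz x (hIcc hx)).continuousAt.continuousWithinAt
    obtain ⟨ξ, hξ, hξ2⟩ := exists_hasDerivAt_eq_slope z (fun x => k x * z x) hu01
      hcont (fun x hx => hz x (hIcc (Ioo_subset_Icc_self hx)))
    rw [← hzz, sub_self, zero_div] at hξ2
    have hξI : ξ ∈ I := hIcc (Ioo_subset_Icc_self hξ)
    exact (mul_ne_zero (hk0 ξ hξI) (hz0 ξ hξI)) hξ2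
  -- Step 3: c u v = A v * z u + (c u0 v - A v * z u0), A v := φ v / k v
  have hstep3 : ∀ v ∈ I, ∀ u ∈ I,
      c u v = (deriv (fun t => c u0 t) v / z u0 / k v) * z u
        + (c u0 v - (deriv (fun t => c u0 t) v / z u0 / k v) * z u0) := by
    intro v hv u hu
    have hq : ∀ x ∈ I, HasDerivAt
        (fun s => c s v - (deriv (fun t => c u0 t) v / z u0 / k v) * z s) 0 x := by
      intro x hx
      have hcu : HasDerivAt (fun s => c s v)
          (k x * deriv (fun t => c x t) v / k v) x := by
        have H := hdu x hx v hv
        have hval : fderiv ℝ F (x, v) (1, 0)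
            = k x * deriv (fun t => c x t) v / k v := by
          have hkey : k v * deriv (fun s => c s v) x
              = k x * deriv (fun t => c x t) v := by
            rw [← hsep2 x hx v hv, hsep1 x hx v hv]
          rw [← H.deriv, eq_div_iff (hk0 v hv)]
          linear_combination hkey
        rwa [hval] at H
      have := hcu.sub ((hz x hx).const_mul
        (deriv (fun t => c u0 t) v / z u0 / k v))
      have heq : k x * deriv (fun t => c x t) v / k v
          - deriv (fun t => c u0 t) v / z u0 / k v * (k x * z x) = 0 := by
        rw [hstep1 v hv x hx]
        ring
      rwa [heq] at this
    have := hconst _ hq u hu u0 hu0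
    linarith [this]
  -- Step 4: B v := (c u0 v - c u1 v)/(z u0 - z u1) satisfies B' = k B, so B = α z
  have hzsub : z u0 - z u1 ≠ 0 := sub_ne_zero.2 hzne
  have hBA : ∀ v ∈ I, (c u0 v - c u1 v) / (z u0 - z u1)
      = deriv (fun t => c u0 t) v / z u0 / k v := by
    intro v hv
    have h1 := hstep3 v hv u1 hu1
    rw [div_eq_iff hzsub]
    linear_combination -h1
  have hBd : ∀ v ∈ I, HasDerivAt (fun v' => (c u0 v' - c u1 v') / (z u0 - z u1))
      (k v * ((c u0 v - c u1 v) / (z u0 - z u1))) v := by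
    intro v hv
    have := ((hgd u0 hu0 v hv).sub (hgd u1 hu1 v hv)).div_const (z u0 - z u1)
    have heq : (deriv (fun t => c u0 t) v - deriv (fun t => c u1 t) v) / (z u0 - z u1)
        = k v * ((c u0 v - c u1 v) / (z u0 - z u1)) := by
      rw [hstep1 v hv u0 hu0, hstep1 v hv u1 hu1, hBA v hv]
      field_simp [hk0 v hv, hz0 u0 hu0]
    rwa [heq] at this
  have hB : ∀ v ∈ I, (c u0 v - c u1 v) / (z u0 - z u1)
      = ((c u0 u0 - c u1 u0) / (z u0 - z u1) / z u0) * z v := by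
    intro v hv
    have hq : ∀ x ∈ I, HasDerivAt
        (fun v' => (c u0 v' - c u1 v') / (z u0 - z u1) / z v') 0 x := by
      intro x hx
      have := (hBd x hx).div (hz x hx) (hz0 x hx)
      have heq : (k x * ((c u0 x - c u1 x) / (z u0 - z u1)) * z x
          - (c u0 x - c u1 x) / (z u0 - z u1) * (k x * z x)) / z x ^ 2 = 0 := by ring
      rwa [heq] at this
    have h := hconst _ hq v hv u0 hu0
    rw [div_eq_div_iff (hz0 v hv) (hz0 u0 hu0)] at h
    rw [div_mul_eq_mul_div, eq_div_iff (hz0 u0 hu0)]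
    linear_combination h
  -- Step 5: τ v := c u0 v - B v * z u0 is constant
  have hτ : ∀ v ∈ I,
      c u0 v - (c u0 v - c u1 v) / (z u0 - z u1) * z u0
        = c u0 u0 - (c u0 u0 - c u1 u0) / (z u0 - z u1) * z u0 := by
    intro v hv
    have hq : ∀ x ∈ I, HasDerivAt
        (fun v' => c u0 v' - (c u0 v' - c u1 v') / (z u0 - z u1) * z u0) 0 x := by
      intro x hx
      have := (hgd u0 hu0 x hx).sub ((hBd x hx).mul_const (z u0))
      have heq : deriv (fun t => c u0 t) x
          - k x * ((c u0 x - c u1 x) / (z u0 - z u1)) * z u0 = 0 := by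
        have h1 := hBA x hx
        rw [h1]
        field_simp [hk0 x hx, hz0 u0 hu0]
        ring
      rwa [heq] at this
    exact hconst _ hq v hv u0 hu0
  -- conclusion
  refine ⟨(c u0 u0 - c u1 u0) / (z u0 - z u1) / z u0,
    c u0 u0 - (c u0 u0 - c u1 u0) / (z u0 - z u1) * z u0, fun u hu v hv => ?_⟩
  have h3 := hstep3 v hv u hu
  have hA := hBA v hv
  have hBv := hB v hv
  have hτv := hτ v hv
  rw [h3, ← hA, hBv]
  rw [hBv] at hτv
  linear_combination hτv
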